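/- For any unit vector g = (x, y, z)ᵀ ∈ S² with z ≠ −1, the matrix B_g satisfies B_gᵀ B_g = I₂, i.e., the transpose B_gᵀ is the Moore–Penrose pseudoinverse of B_g. -/

import Mathlib

open Matrix

noncomputable section

/-- The 3×2 tangent-basis matrix `B_g` for `g = (x, y, z)ᵀ ∈ S²` with `z ≠ −1`. -/
def Bmat (x y z : ℝ) : Matrix (Fin 3) (Fin 2) ℝ :=
  !![1 - x ^ 2 / (1 + z), -(x * y) / (1 + z);
     -(x * y) / (1 + z), 1 - y ^ 2 / (1 + z);
     -x, -y]

/-- For any unit vector `g = (x, y, z)ᵀ ∈ S²` with `z ≠ −1`,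
`B_gᵀ B_g = I₂`; hence (the matrix having full column rank) the transpose `B_gᵀ`
is the Moore–Penrose pseudoinverse `(B_gᵀ B_g)⁻¹ B_gᵀ` of `B_g`. -/
theorem Bmat_transpose_mul_self (x y z : ℝ) (hunit : x ^ 2 + y ^ 2 + z ^ 2 = 1)
    (hz : z ≠ -1) :
    (Bmat x y z)ᵀ * Bmat x y z = 1 ∧
      ((Bmat x y z)ᵀ * Bmat x y z)⁻¹ * (Bmat x y z)ᵀ = (Bmat x y z)ᵀ := by
  have h : (1 : ℝ) + z ≠ 0 := by
    intro h; apply hz; linarith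
  have key : (Bmat x y z)ᵀ * Bmat x y z = 1 := by
    have hxy : x ^ 2 + y ^ 2 = (1 + z) * (1 - z) := by nlinarith
    ext i j
    fin_cases i <;> fin_cases j <;>
      simp [Bmat, Matrix.mul_apply, Fin.sum_univ_succ, Matrix.one_apply] <;>
      field_simp <;>
      first
        | nlinarith [hxy]
        | linear_combination (x * y) * hxy
  refine ⟨key, ?_⟩
  rw [key]
  simp
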